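/- Let x be a dense pattern (w.r.t. ρ) containing at least one don't care. Then x can be split at a don't care into two dense patterns: there exist an index s₁ with x[s₁] = ∘ (more generally a don't care block) such that the pattern obtained from x[0..s₁-1] and the pattern obtained from x[s₁+1..|x|-1], each stripped of leading/trailing don't cares, are both dense w.r.t. ρ. -/

import Mathlib

/-- Number of don't care characters (`none`) in a pattern. -/
def dc {α : Type*} (x : List (Option α)) : ℕ := (x.filter Option.isNone).length

/-- Density of a pattern: 1 - dc(x)/|x|. -/
def density {α : Type*} (x : List (Option α)) : ℚ := 1 - (dc x : ℚ) / (x.length : ℚ)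

/-- A pattern is dense w.r.t. threshold ρ if its density is at least ρ. -/
def IsDense {α : Type*} (ρ : ℚ) (x : List (Option α)) : Prop := ρ ≤ density x

/-- A pattern begins and ends with a solid character. -/
def SolidEnds {α : Type*} (x : List (Option α)) : Prop :=
  x.getD 0 none ≠ none ∧ x.getD (x.length - 1) none ≠ none

/-- Strip leading and trailing don't cares from a pattern. -/
def strip {α : Type*} (x : List (Option α)) : List (Option α) :=
  ((x.dropWhile Option.isNone).reverse.dropWhile Option.isNone).reverse

/-- Auxiliary potential: `gq ρ y = dc y - (1-ρ)|y|`.  A nonempty pattern is dense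
iff its potential is nonpositive, and the potential is additive over append. -/
def gq {α : Type*} (ρ : ℚ) (y : List (Option α)) : ℚ :=
  (dc y : ℚ) - (1 - ρ) * (y.length : ℚ)

lemma dc_append {α : Type*} (a b : List (Option α)) : dc (a ++ b) = dc a + dc b := by
  simp [dc, List.filter_append]

lemma gq_append {α : Type*} (ρ : ℚ) (a b : List (Option α)) :
    gq ρ (a ++ b) = gq ρ a + gq ρ b := by
  simp only [gq, dc_append, List.length_append]
  push_cast
  ring

lemma gq_cons_none {α : Type*} (ρ : ℚ) (l : List (Option α)) :
    gq ρ ((none : Option α) :: l) = ρ + gq ρ l := by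
  simp only [gq, dc, List.filter_cons, Option.isNone_none, if_pos, List.length_cons]
  push_cast
  ring

lemma isDense_iff_gq {α : Type*} (ρ : ℚ) {y : List (Option α)} (hy : y ≠ []) :
    IsDense ρ y ↔ gq ρ y ≤ 0 := by
  have hL : (0 : ℚ) < (y.length : ℚ) := by
    exact_mod_cast List.length_pos_iff.mpr hy
  unfold IsDense density gq
  constructor <;> intro h
  · have h2 : (dc y : ℚ) / (y.length : ℚ) ≤ 1 - ρ := by linarith
    rw [div_le_iff₀ hL] at h2
    linarith
  · have h2 : (dc y : ℚ) / (y.length : ℚ) ≤ 1 - ρ := by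
      rw [div_le_iff₀ hL]; linarith
    linarith

lemma strip_eq_self {α : Type*} {y : List (Option α)} (hy : y ≠ [])
    (h0 : y.getD 0 none ≠ none) (h1 : y.getD (y.length - 1) none ≠ none) :
    strip y = y := by
  have hl : 0 < y.length := List.length_pos_iff.mpr hy
  have e1 : y.dropWhile Option.isNone = y := by
    rw [List.dropWhile_eq_self_iff]
    intro hl'
    rw [Option.isNone_iff_eq_none]
    rw [← List.getD_eq_getElem y none hl']
    exact h0
  have e2 : y.reverse.dropWhile Option.isNone = y.reverse := by
    rw [List.dropWhile_eq_self_iff]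
    intro hl'
    rw [List.getElem_reverse]
    rw [Option.isNone_iff_eq_none]
    have hlt : y.length - 1 - 0 < y.length := by omega
    rw [← List.getD_eq_getElem y none hlt]
    simpa using h1
  unfold strip
  rw [e1, e2, List.reverse_reverse]

lemma getElem_idx_congr {α : Type*} (l : List α) {i j : ℕ} (hij : i = j)
    (hi : i < l.length) : l[i] = l[j]'(hij ▸ hi) := by
  subst hij; rfl

lemma getElem_list_congr {α : Type*} {l l' : List α} (h : l = l') {i : ℕ}
    (hi : i < l.length) : l[i] = l'[i]'(h ▸ hi) := by
  subst h; rfl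

open Classical in
/-- Decomposition step of Theorem 1: a dense pattern containing a don't care can be
split at a don't care position so that both parts, stripped of leading/trailing don't
cares, are dense. -/
theorem dense_split_at_dontcare {α : Type*} (ρ : ℚ) (hρ0 : 0 < ρ) (hρ1 : ρ ≤ 1)
    (x : List (Option α)) (hends : SolidEnds x) (hdc : 0 < dc x)
    (hdense : IsDense ρ x) :
    ∃ k < x.length, x.getD k none = none ∧
      IsDense ρ (strip (x.take k)) ∧ IsDense ρ (strip (x.drop (k + 1))) := by
  classical
  obtain ⟨hx0, hxl⟩ := hends
  have hxne : x ≠ [] := by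
    intro h; simp [h, dc] at hdc
  have hn : 0 < x.length := List.length_pos_iff.mpr hxne
  have hxlast : x[x.length - 1]'(by omega) ≠ none := by
    rw [← List.getD_eq_getElem x none (by omega)]
    exact hxl
  -- there is a don't care somewhere
  have hex : ∃ i, i < x.length ∧ x.getD i none = none := by
    have h1 : ∃ a ∈ x, a.isNone := by
      by_contra h
      push_neg at h
      have h2 : List.filter Option.isNone x = [] :=
        List.filter_eq_nil_iff.mpr (by simpa using h)
      simp [dc, h2] at hdc
    obtain ⟨a, ha, hna⟩ := h1
    obtain ⟨i, hi, rfl⟩ := List.getElem_of_mem ha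
    exact ⟨i, hi, by
      rw [List.getD_eq_getElem _ _ hi]
      exact Option.isNone_iff_eq_none.mp hna⟩
  -- the first don't care
  obtain ⟨i0, hi0lt, hi0none, hi0min⟩ :
      ∃ i, i < x.length ∧ x.getD i none = none ∧ ∀ j < i, x.getD j none ≠ none := by
    refine ⟨Nat.find hex, (Nat.find_spec hex).1, (Nat.find_spec hex).2, ?_⟩
    intro j hj hcon
    exact Nat.find_min hex hj ⟨lt_trans hj (Nat.find_spec hex).1, hcon⟩
  have hi0pos : 0 < i0 := by
    rcases Nat.eq_zero_or_pos i0 with h | h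
    · exact absurd (h ▸ hi0none) hx0
    · exact h
  -- dc of an all-solid prefix/sublist vanishes
  have hdc_take : ∀ (y : List (Option α)) (m : ℕ),
      (∀ j, j < m → j < y.length → y.getD j none ≠ none) → dc (y.take m) = 0 := by
    intro y m hm
    simp only [dc, List.length_eq_zero_iff]
    rw [List.filter_eq_nil_iff]
    intro a ha
    obtain ⟨j, hj, rfl⟩ := List.getElem_of_mem ha
    have hj1 : j < m := by
      have := hj; rw [List.length_take] at this; omega
    have hj2 : j < y.length := by
      have := hj; rw [List.length_take] at this; omega
    rw [List.getElem_take]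
    rw [Option.isNone_iff_eq_none]
    rw [← List.getD_eq_getElem y none hj2]
    exact hm j hj1 hj2
  have hPi0 : i0 < x.length ∧ x.getD i0 none = none ∧
      x.getD (i0 - 1) none ≠ none ∧ gq ρ (x.take i0) ≤ 0 := by
    refine ⟨hi0lt, hi0none, hi0min _ (by omega), ?_⟩
    have hdc0 : dc (x.take i0) = 0 := hdc_take x i0 (fun j hj _ => hi0min j hj)
    rw [gq, hdc0]
    have hlen : (0 : ℚ) ≤ ((x.take i0).length : ℚ) := by positivity
    have h1 : (0 : ℚ) ≤ (1 - ρ) * ((x.take i0).length : ℚ) :=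
      mul_nonneg (by linarith) hlen
    push_cast
    linarith
  -- the greatest don't care at a run start with dense left part
  obtain ⟨k, ⟨hklt, hknone, hkprev, hkg⟩, hkmax⟩ :
      ∃ k, (k < x.length ∧ x.getD k none = none ∧ x.getD (k - 1) none ≠ none ∧
              gq ρ (x.take k) ≤ 0) ∧
        ∀ m, k < m → m ≤ x.length - 1 →
          ¬(m < x.length ∧ x.getD m none = none ∧ x.getD (m - 1) none ≠ none ∧
              gq ρ (x.take m) ≤ 0) := by
    refine ⟨Nat.findGreatest (fun m => m < x.length ∧ x.getD m none = none ∧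
        x.getD (m - 1) none ≠ none ∧ gq ρ (x.take m) ≤ 0) (x.length - 1),
      Nat.findGreatest_spec (P := fun m => m < x.length ∧ x.getD m none = none ∧
        x.getD (m - 1) none ≠ none ∧ gq ρ (x.take m) ≤ 0)
        (show i0 ≤ x.length - 1 by omega) hPi0,
      fun m h1 h2 => Nat.findGreatest_is_greatest h1 h2⟩
  have hk1 : 1 ≤ k := by
    rcases Nat.eq_zero_or_pos k with h | h
    · exact absurd (h ▸ hknone) hx0
    · exact h
  have hktlen : (x.take k).length = k := by
    rw [List.length_take]; omega
  have hktne : x.take k ≠ [] := by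
    intro h
    have := congrArg List.length h
    rw [hktlen] at this
    simp at this
    omega
  -- the left part is dense
  have hstripk : strip (x.take k) = x.take k := by
    refine strip_eq_self hktne ?_ ?_
    · have h0 : 0 < (x.take k).length := by omega
      rw [List.getD_eq_getElem _ _ h0, List.getElem_take]
      rw [← List.getD_eq_getElem x none (by omega)]
      exact hx0
    · rw [hktlen]
      have h0 : k - 1 < (x.take k).length := by omega
      rw [List.getD_eq_getElem _ _ h0, List.getElem_take]
      rw [← List.getD_eq_getElem x none (by omega)]
      exact hkprev
  have hleft : IsDense ρ (strip (x.take k)) := by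
    rw [hstripk, isDense_iff_gq ρ hktne]
    exact hkg
  refine ⟨k, hklt, hknone, hleft, ?_⟩
  -- right part: by contradiction
  by_contra hnd
  have hk2 : k + 1 < x.length := by
    have : k ≠ x.length - 1 := fun h => hxl (h ▸ hknone)
    omega
  set A := x.drop (k + 1) with hAdef
  have hAlen : A.length = x.length - (k + 1) := by
    rw [hAdef, List.length_drop]
  have hAlenpos : 0 < A.length := by omega
  set u := A.takeWhile Option.isNone with hudef
  set B := A.dropWhile Option.isNone with hBdef
  set t := u.length with htdef
  have huB : u ++ B = A := List.takeWhile_append_dropWhile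
  have hBdrop : A.drop t = B := by
    conv_lhs => rw [← huB]
    exact List.drop_left
  have htB : A.length = t + B.length := by
    conv_lhs => rw [← huB]
    rw [List.length_append]
  -- elements of A in terms of x
  have hAx : ∀ j (hj : j < A.length), A[j] = x[k + 1 + j]'(by omega) := by
    intro j hj
    exact List.getElem_drop
  -- last element of A is solid
  have hAlast : A[A.length - 1]'(by omega) ≠ none := by
    rw [hAx (A.length - 1) (by omega)]
    have e := getElem_idx_congr x
      (show k + 1 + (A.length - 1) = x.length - 1 by omega) (by omega)
    rw [e]
    exact hxlast
  have hBne : B ≠ [] := by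
    intro h
    have hall : ∀ a ∈ A, Option.isNone a :=
      List.dropWhile_eq_nil_iff.mp (by rw [← hBdef]; exact h)
    have hmem := hall _ (List.getElem_mem (l := A) (n := A.length - 1) (by omega))
    rw [Option.isNone_iff_eq_none] at hmem
    exact hAlast hmem
  have hBlenpos : 0 < B.length := List.length_pos_iff.mpr hBne
  -- elements of B in terms of x
  have hBx : ∀ j (hj : j < B.length), B[j] = x[k + 1 + t + j]'(by omega) := by
    intro j hj
    have e1 := getElem_list_congr hBdrop.symm (i := j) hj
    rw [e1, List.getElem_drop, hAx (t + j) (by omega)]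
    exact getElem_idx_congr x (by omega) (by omega)
  -- last element of B is solid
  have hBlast : B.getD (B.length - 1) none ≠ none := by
    rw [List.getD_eq_getElem _ _ (by omega : B.length - 1 < B.length)]
    rw [hBx (B.length - 1) (by omega)]
    have e := getElem_idx_congr x
      (show k + 1 + t + (B.length - 1) = x.length - 1 by omega) (by omega)
    rw [e]
    exact hxlast
  -- first element of B is solid
  have hB0 : B.getD 0 none ≠ none := by
    have h1 := fun w => List.head_dropWhile_not Option.isNone (l := A) w
    rw [← hBdef] at h1
    have h2 := h1 hBne
    rw [List.head_eq_getElem] at h2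
    rw [List.getD_eq_getElem _ _ (by omega : 0 < B.length)]
    intro hcon
    rw [hcon] at h2
    simp at h2
  -- strip A = B
  have hstripA : strip A = B := by
    unfold strip
    rw [← hBdef]
    have e2 : B.reverse.dropWhile Option.isNone = B.reverse := by
      rw [List.dropWhile_eq_self_iff]
      intro hl'
      rw [List.getElem_reverse]
      rw [Option.isNone_iff_eq_none]
      simp only [Nat.sub_zero]
      rw [← List.getD_eq_getElem B none (by omega)]
      exact hBlast
    rw [e2, List.reverse_reverse]
  -- B is not dense, so gq ρ B > 0
  have hgB : 0 < gq ρ B := by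
    by_contra h
    push_neg at h
    exact hnd (by rw [hstripA, isDense_iff_gq ρ hBne]; exact h)
  -- B contains a don't care
  have hexB : ∃ j, j < B.length ∧ B.getD j none = none := by
    by_contra h
    push_neg at h
    have hdcB : dc B = 0 := by
      simp only [dc, List.length_eq_zero_iff]
      rw [List.filter_eq_nil_iff]
      intro a ha
      obtain ⟨j, hj, rfl⟩ := List.getElem_of_mem ha
      rw [Option.isNone_iff_eq_none]
      rw [← List.getD_eq_getElem B none hj]
      exact h j hj
    rw [gq, hdcB] at hgB
    have hlen : (0 : ℚ) ≤ (B.length : ℚ) := by positivity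
    have h1 : (0 : ℚ) ≤ (1 - ρ) * (B.length : ℚ) := mul_nonneg (by linarith) hlen
    push_cast at hgB
    linarith
  -- the first don't care of B
  obtain ⟨p, hplt, hpnone, hpprev⟩ :
      ∃ p, p < B.length ∧ B.getD p none = none ∧ ∀ j < p, B.getD j none ≠ none := by
    refine ⟨Nat.find hexB, (Nat.find_spec hexB).1, (Nat.find_spec hexB).2, ?_⟩
    intro j hj hcon
    exact Nat.find_min hexB hj ⟨lt_trans hj (Nat.find_spec hexB).1, hcon⟩
  have hp1 : 1 ≤ p := by
    rcases Nat.eq_zero_or_pos p with h | h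
    · exact absurd (h ▸ hpnone) hB0
    · exact h
  -- the global index of the first don't care of B
  obtain ⟨k', hk'def⟩ : ∃ m, m = k + 1 + t + p := ⟨_, rfl⟩
  have hk'lt : k' < x.length := by omega
  have hxk' : x[k']'hk'lt = none := by
    have e := getElem_idx_congr x (show k' = k + 1 + t + p from hk'def) hk'lt
    rw [e, ← hBx p hplt]
    rw [← List.getD_eq_getElem B none hplt]
    exact hpnone
  have hk'none : x.getD k' none = none := by
    rw [List.getD_eq_getElem _ _ hk'lt]
    exact hxk'
  have hk'prev : x.getD (k' - 1) none ≠ none := by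
    have hplt' : p - 1 < B.length := by omega
    rw [List.getD_eq_getElem _ _ (show k' - 1 < x.length by omega)]
    have e := getElem_idx_congr x (show k' - 1 = k + 1 + t + (p - 1) by omega)
      (by omega)
    rw [e, ← hBx (p - 1) hplt']
    rw [← List.getD_eq_getElem B none hplt']
    exact hpprev (p - 1) (by omega)
  -- maximality of k: x.take k' has positive potential
  have hgk' : 0 < gq ρ (x.take k') := by
    by_contra h
    push_neg at h
    exact hkmax k' (by omega) (by omega) ⟨hk'lt, hk'none, hk'prev, h⟩
  -- global potential inequality
  have hgx : gq ρ x ≤ 0 := (isDense_iff_gq ρ hxne).mp hdense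
  have hdropsplit : x.drop k' = (none : Option α) :: x.drop (k' + 1) := by
    rw [List.drop_eq_getElem_cons hk'lt, hxk']
  have hxsplit : gq ρ (x.take k') + (ρ + gq ρ (x.drop (k' + 1))) ≤ 0 := by
    have h2 : gq ρ (x.take k' ++ x.drop k') ≤ 0 := by
      rw [List.take_append_drop]; exact hgx
    rw [gq_append, hdropsplit, gq_cons_none] at h2
    exact h2
  -- potential of B
  have hBdropp : B.drop p = x.drop k' := by
    rw [← hBdrop, List.drop_drop, hAdef, List.drop_drop]
    congr 1
    omega
  have hdcBp : dc (B.take p) = 0 := hdc_take B p (fun j hj _ => hpprev j hj)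
  have hBplen : (B.take p).length = p := by
    rw [List.length_take]; omega
  have hgBp : gq ρ (B.take p) = -(1 - ρ) * (p : ℚ) := by
    rw [gq, hdcBp, hBplen]
    push_cast
    ring
  have hgBeq : gq ρ B = -(1 - ρ) * (p : ℚ) + (ρ + gq ρ (x.drop (k' + 1))) := by
    conv_lhs => rw [← List.take_append_drop p B]
    rw [gq_append, hgBp, hBdropp, hdropsplit, gq_cons_none]
  -- derive the contradiction
  have hpnonneg : (0 : ℚ) ≤ (1 - ρ) * (p : ℚ) := by
    have h1 : (0 : ℚ) ≤ (p : ℚ) := by positivity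
    nlinarith
  rw [hgBeq] at hgB
  linarith
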